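/- Let p(N) = N^{-1} log Z(N) with Z(N) = ∫_{Ω^N} e^{−H_N} dα^{⊗N}, and p̃(N) = N^{-1} log Z̃(N) with Z̃(N) = ∫_{Ω^N} e^{−N Φ(μ_x)} dα^{⊗N}(x), where φ is bounded. Then |p(N) − p̃(N)| ≤ (n(n−1)/N)·‖φ‖_∞; hence p(N) and p̃(N) either both converge or both diverge, and if they converge their limits are equal. -/

import Mathlib

open MeasureTheory Filter
open scoped ENNReal Classical

lemma sum_inj_eq_factorial_mul_sum_sm {N n : ℕ} (f : (Fin n → Fin N) → ℝ)
    (hsym : ∀ (σ : Equiv.Perm (Fin n)) (j : Fin n → Fin N), f (j ∘ σ) = f j) :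
    ∑ j ∈ Finset.univ.filter (fun j : Fin n → Fin N => Function.Injective j), f j
      = (Nat.factorial n : ℝ) * ∑ j ∈ Finset.univ.filter (fun j : Fin n → Fin N => StrictMono j), f j := by
  classical
  have h1 : ∑ j ∈ Finset.univ.filter (fun j : Fin n → Fin N => Function.Injective j), f j
      = ∑ p ∈ (Finset.univ : Finset (Equiv.Perm (Fin n))) ×ˢ
          (Finset.univ.filter (fun m : Fin n → Fin N => StrictMono m)),
          f (p.2 ∘ (p.1 : Equiv.Perm (Fin n))) := by
    refine Finset.sum_bij'
      (i := fun j _ => (((Tuple.sort j)⁻¹ : Equiv.Perm (Fin n)), j ∘ Tuple.sort j))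
      (j := fun p _ => p.2 ∘ (p.1 : Equiv.Perm (Fin n))) ?_ ?_ ?_ ?_ ?_
    · intro j hj
      rw [Finset.mem_filter] at hj
      refine Finset.mem_product.2 ⟨Finset.mem_univ _, Finset.mem_filter.2 ⟨Finset.mem_univ _, ?_⟩⟩
      exact (Tuple.monotone_sort j).strictMono_of_injective (hj.2.comp (Equiv.injective _))
    · intro p hp
      rw [Finset.mem_product, Finset.mem_filter] at hp
      refine Finset.mem_filter.2 ⟨Finset.mem_univ _, ?_⟩
      exact (hp.2.2.injective).comp (Equiv.injective _)
    · intro j hj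
      simp only
      ext i
      simp
    · intro p hp
      rw [Finset.mem_product, Finset.mem_filter] at hp
      obtain ⟨σ, m⟩ := p
      have hm : StrictMono m := hp.2.2
      have hinj : Function.Injective (m ∘ (σ : Equiv.Perm (Fin n))) :=
        hm.injective.comp (Equiv.injective _)
      have hmono : Monotone ((m ∘ (σ : Equiv.Perm (Fin n))) ∘ ((σ⁻¹ : Equiv.Perm (Fin n)) : Fin n → Fin n)) := by
        have : (m ∘ (σ : Equiv.Perm (Fin n))) ∘ ((σ⁻¹ : Equiv.Perm (Fin n)) : Fin n → Fin n) = m := by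
          ext i; simp
        rw [this]; exact hm.monotone
      have hsort : (m ∘ (σ : Equiv.Perm (Fin n))) ∘ ((σ⁻¹ : Equiv.Perm (Fin n)) : Fin n → Fin n)
          = (m ∘ (σ : Equiv.Perm (Fin n))) ∘ (Tuple.sort (m ∘ (σ : Equiv.Perm (Fin n)))) :=
        Tuple.comp_sort_eq_comp_iff_monotone.2 hmono
      have hσ : (σ⁻¹ : Equiv.Perm (Fin n)) = Tuple.sort (m ∘ (σ : Equiv.Perm (Fin n))) :=
        Equiv.ext fun i => hinj (congrFun hsort i)
      simp only [Prod.mk.injEq]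
      constructor
      · rw [← hσ]; simp
      · rw [← hσ]; ext i; simp
    · intro j hj
      simp only
      have hcomp : (j ∘ ⇑(Tuple.sort j)) ∘ ⇑((Tuple.sort j)⁻¹) = j := by ext i; simp
      rw [hcomp]
  rw [h1, Finset.sum_product]
  have h2 : ∀ σ : Equiv.Perm (Fin n),
      ∑ m ∈ Finset.univ.filter (fun m : Fin n → Fin N => StrictMono m), f (m ∘ σ)
      = ∑ m ∈ Finset.univ.filter (fun m : Fin n → Fin N => StrictMono m), f m := by
    intro σ
    exact Finset.sum_congr rfl fun m _ => hsym σ m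
  simp_rw [h2]
  simp [Finset.sum_const, Finset.card_univ, Fintype.card_perm, Fintype.card_fin, nsmul_eq_mul]

lemma pow_sub_descFactorial_le (N : ℕ) : ∀ n : ℕ, n ≤ N →
    (N:ℝ)^n - (N.descFactorial n : ℝ) ≤ (n:ℝ) * ((n:ℝ)-1) / 2 * (N:ℝ)^(n-1) := by
  intro n
  induction n with
  | zero => simp
  | succ k ih =>
    intro hk
    have hkN : k ≤ N := Nat.le_of_succ_le hk
    have ihk := ih hkN
    have hdesc_le : (N.descFactorial k : ℝ) ≤ (N:ℝ)^k := by
      exact_mod_cast Nat.descFactorial_le_pow N k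
    have hdesc_nonneg : (0:ℝ) ≤ (N.descFactorial k : ℝ) := by positivity
    have hsucc : (N.descFactorial (k+1) : ℝ) = ((N:ℝ) - k) * N.descFactorial k := by
      rw [Nat.descFactorial_succ]
      push_cast [Nat.cast_sub hkN]
      ring
    rcases Nat.eq_zero_or_pos k with rfl | hkpos
    · simp [Nat.descFactorial]
    · have hk1 : (N:ℝ) * (N:ℝ)^(k-1) = (N:ℝ)^k := by
        rw [← pow_succ']
        congr 1
        omega
      have hNpos : (0:ℝ) ≤ (N:ℝ) := by positivity
      have hmul := mul_le_mul_of_nonneg_left ihk hNpos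
      rw [mul_sub] at hmul
      have hexp : (k + 1 : ℕ) - 1 = k := by omega
      rw [hexp]
      rw [pow_succ', hsucc]
      push_cast
      have hr : (N:ℝ) * ((k:ℝ) * ((k:ℝ) - 1) / 2 * (N:ℝ) ^ (k - 1))
          = (k:ℝ) * ((k:ℝ)-1)/2 * (N:ℝ)^k := by rw [← hk1]; ring
      have hkD := mul_le_mul_of_nonneg_left hdesc_le (by positivity : (0:ℝ) ≤ (k:ℝ))
      rw [hr] at hmul
      nlinarith [hmul, hkD]

lemma integral_pi_empirical {Ω : Type*} [MeasurableSpace Ω] {n N : ℕ} (hN : 0 < N)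
    (φ : (Fin n → Ω) → ℝ) (hmeas : Measurable φ) (x : Fin N → Ω) :
    ∫ y, φ y ∂(Measure.pi fun _ : Fin n => ((N : ℝ≥0∞))⁻¹ • ∑ i : Fin N, Measure.dirac (x i))
      = ((N:ℝ)^n)⁻¹ * ∑ j : Fin n → Fin N, φ (x ∘ j) := by
  classical
  have hx : Measurable x := Measurable.of_discrete
  have hNne : (N : ℝ≥0∞) ≠ 0 := by exact_mod_cast hN.ne'
  have hNtop : (N : ℝ≥0∞) ≠ ⊤ := ENNReal.natCast_ne_top N
  set u : Measure (Fin N) := ((N : ℝ≥0∞))⁻¹ • ∑ i : Fin N, Measure.dirac i with hu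
  set ν : Measure Ω := ((N : ℝ≥0∞))⁻¹ • ∑ i : Fin N, Measure.dirac (x i) with hν
  haveI hup : IsProbabilityMeasure u := ⟨by
    rw [hu, Measure.smul_apply, Measure.finset_sum_apply]
    simp only [measure_univ, Finset.sum_const, Finset.card_univ, Fintype.card_fin,
      nsmul_eq_mul, mul_one, smul_eq_mul]
    exact ENNReal.inv_mul_cancel hNne hNtop⟩
  haveI hνp : IsProbabilityMeasure ν := ⟨by
    rw [hν, Measure.smul_apply, Measure.finset_sum_apply]
    simp only [measure_univ, Finset.sum_const, Finset.card_univ, Fintype.card_fin,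
      nsmul_eq_mul, mul_one, smul_eq_mul]
    exact ENNReal.inv_mul_cancel hNne hNtop⟩
  have hmap : Measure.map x u = ν := by
    rw [hu, Measure.map_smul]
    congr 1
    simp_rw [← Measure.mapₗ_apply_of_measurable hx]
    rw [map_sum]
    simp [Measure.mapₗ_apply_of_measurable hx, Measure.map_dirac' hx]
  have hmp : MeasurePreserving (fun (a : Fin n → Fin N) (i : Fin n) => x (a i))
      (Measure.pi fun _ : Fin n => u) (Measure.pi fun _ : Fin n => ν) :=
    measurePreserving_pi _ _ (fun _ => ⟨hx, hmap⟩)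
  rw [← hmp.map_eq]
  rw [integral_map hmp.measurable.aemeasurable hmeas.aestronglyMeasurable]
  rw [integral_fintype Integrable.of_finite]
  have hsingle : ∀ j : Fin n → Fin N,
      ((Measure.pi fun _ : Fin n => u) {j}) = ((N : ℝ≥0∞)^n)⁻¹ := by
    intro j
    rw [← Set.univ_pi_singleton, Measure.pi_pi]
    have : ∀ i : Fin n, u {j i} = ((N : ℝ≥0∞))⁻¹ := by
      intro i
      rw [hu, Measure.smul_apply, Measure.finset_sum_apply]
      simp [Measure.dirac_apply, Set.indicator_apply, Finset.sum_ite_eq]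
    simp [this, ENNReal.inv_pow]
  rw [Finset.mul_sum]
  refine Finset.sum_congr rfl fun j _ => ?_
  rw [Measure.real_def, hsingle j]
  rw [smul_eq_mul]
  congr 1
  simp [ENNReal.toReal_inv]

lemma log_integral_exp_compare {X : Type*} [MeasurableSpace X] (μ : Measure X)
    [IsProbabilityMeasure μ] (f g : X → ℝ) (hf : Measurable f) (hg : Measurable g)
    (a : ℝ) (hfa : ∀ x, |f x| ≤ a) (hga : ∀ x, |g x| ≤ a)
    (ε : ℝ) (hfg : ∀ x, |f x - g x| ≤ ε) :
    |Real.log (∫ x, Real.exp (-f x) ∂μ) - Real.log (∫ x, Real.exp (-g x) ∂μ)| ≤ ε := by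
  have hint : ∀ (u : X → ℝ), Measurable u → (∀ x, |u x| ≤ a) →
      Integrable (fun x => Real.exp (-u x)) μ := by
    intro u hu hua
    refine ⟨((hu.neg).exp).aestronglyMeasurable,
      HasFiniteIntegral.of_bounded (C := Real.exp a) (ae_of_all _ fun x => ?_)⟩
    rw [Real.norm_eq_abs, abs_of_pos (Real.exp_pos _)]
    apply Real.exp_le_exp.2
    have := hua x; rw [abs_le] at this; linarith
  have hpos : ∀ (u : X → ℝ), Measurable u → (∀ x, |u x| ≤ a) →
      0 < ∫ x, Real.exp (-u x) ∂μ := by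
    intro u hu hua
    have h1 : Real.exp (-a) ≤ ∫ x, Real.exp (-u x) ∂μ := by
      calc Real.exp (-a) = ∫ _x, Real.exp (-a) ∂μ := by simp
      _ ≤ _ := integral_mono (integrable_const _) (hint u hu hua) (fun x => by
            apply Real.exp_le_exp.2
            have := hua x; rw [abs_le] at this; linarith)
    exact lt_of_lt_of_le (Real.exp_pos _) h1
  have half : ∀ (u v : X → ℝ), Measurable u → Measurable v →
      (∀ x, |u x| ≤ a) → (∀ x, |v x| ≤ a) → (∀ x, |u x - v x| ≤ ε) →
      Real.log (∫ x, Real.exp (-u x) ∂μ) - Real.log (∫ x, Real.exp (-v x) ∂μ) ≤ ε := by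
    intro u v hu hv hua hva huv
    have hle : ∫ x, Real.exp (-u x) ∂μ ≤ Real.exp ε * ∫ x, Real.exp (-v x) ∂μ := by
      rw [← integral_const_mul]
      refine integral_mono (hint u hu hua) ((hint v hv hva).const_mul _) (fun x => ?_)
      rw [← Real.exp_add]
      apply Real.exp_le_exp.2
      have := huv x; rw [abs_le] at this; linarith
    have := Real.log_le_log (hpos u hu hua) hle
    rw [Real.log_mul (Real.exp_ne_zero _) (hpos v hv hva).ne', Real.log_exp] at this
    linarith
  rw [abs_sub_le_iff]
  exact ⟨half f g hf hg hfa hga hfg, half g f hg hf hga hfa (fun x => by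
    rw [abs_sub_comm]; exact hfg x)⟩

/-- With `p(N) = N⁻¹ log ∫ e^{−H_N} dα^{⊗N}` for the mean-field
Hamiltonian `H_N` and `p̃(N) = N⁻¹ log ∫ e^{−N Φ(μ_x)} dα^{⊗N}`, where `φ` is bounded
(by `C`) measurable and symmetric, one has `|p(N) − p̃(N)| ≤ n(n−1)/N · ‖φ‖_∞` for
`N ≥ n`; hence `p` and `p̃` converge together, and to the same limit. -/
theorem pressure_compare_and_common_limit
    {Ω : Type*} [MetricSpace Ω] [CompactSpace Ω] [MeasurableSpace Ω] [BorelSpace Ω]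
    (α : Measure Ω) [IsProbabilityMeasure α] (n : ℕ) (hn : 1 ≤ n)
    (φ : (Fin n → Ω) → ℝ) (hmeas : Measurable φ) (C : ℝ) (hb : ∀ y, |φ y| ≤ C)
    (hsym : ∀ (σ : Equiv.Perm (Fin n)) (y : Fin n → Ω), φ (y ∘ σ) = φ y)
    (Φ : Measure Ω → ℝ)
    (hΦ : ∀ μ : Measure Ω, Φ μ = ∫ y, φ y ∂(Measure.pi fun _ : Fin n => μ))
    (p pt : ℕ → ℝ)
    (hp : ∀ N : ℕ, p N = (N : ℝ)⁻¹ * Real.log (∫ x : Fin N → Ω,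
        Real.exp (-((N : ℝ) * ((N.choose n : ℝ))⁻¹ *
          ∑ j : Fin n → Fin N, (if StrictMono j then φ (x ∘ j) else 0)))
          ∂(Measure.pi fun _ : Fin N => α)))
    (hpt : ∀ N : ℕ, pt N = (N : ℝ)⁻¹ * Real.log (∫ x : Fin N → Ω,
        Real.exp (-((N : ℝ) * Φ (((N : ℝ≥0∞))⁻¹ • ∑ i : Fin N, Measure.dirac (x i))))
          ∂(Measure.pi fun _ : Fin N => α))) :
    (∀ N : ℕ, n ≤ N → |p N - pt N| ≤ ((n : ℝ) * ((n : ℝ) - 1)) / N * C)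
    ∧ (∀ L : ℝ, Tendsto p atTop (nhds L) ↔ Tendsto pt atTop (nhds L)) := by
  classical
  haveI hΩ : Nonempty Ω := by
    by_contra h
    rw [not_nonempty_iff] at h
    have h1 : α Set.univ = 1 := measure_univ
    rw [Set.univ_eq_empty_iff.2 h] at h1
    simp at h1
  have hC : 0 ≤ C := le_trans (abs_nonneg _) (hb (Classical.arbitrary _))
  have hmain : ∀ N : ℕ, n ≤ N → |p N - pt N| ≤ ((n : ℝ) * ((n : ℝ) - 1)) / N * C := by
    intro N hNn
    have hNpos : 0 < N := lt_of_lt_of_le hn hNn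
    have hNR : (0:ℝ) < N := by exact_mod_cast hNpos
    set μN := (Measure.pi fun _ : Fin N => α) with hμN
    set F : (Fin N → Ω) → ℝ := fun x => (N : ℝ) * ((N.choose n : ℝ))⁻¹ *
        ∑ j : Fin n → Fin N, (if StrictMono j then φ (x ∘ j) else 0) with hFdef
    set G : (Fin N → Ω) → ℝ := fun x =>
        (N : ℝ) * (((N:ℝ)^n)⁻¹ * ∑ j : Fin n → Fin N, φ (x ∘ j)) with hGdef
    -- rewrite p, pt
    have hpN : p N = (N : ℝ)⁻¹ * Real.log (∫ x, Real.exp (-(F x)) ∂μN) := hp N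
    have hptN : pt N = (N : ℝ)⁻¹ * Real.log (∫ x, Real.exp (-(G x)) ∂μN) := by
      rw [hpt N]
      have hΦx : ∀ x : Fin N → Ω, Φ (((N : ℝ≥0∞))⁻¹ • ∑ i : Fin N, Measure.dirac (x i))
          = ((N:ℝ)^n)⁻¹ * ∑ j : Fin n → Fin N, φ (x ∘ j) := fun x => by
        rw [hΦ]; exact integral_pi_empirical hNpos φ hmeas x
      simp_rw [hΦx]
      rfl
    -- basic quantities
    set D : ℝ := (N.descFactorial n : ℝ) with hD
    set P : ℝ := ((N:ℝ))^n with hP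
    have hfact : D = (Nat.factorial n : ℝ) * (N.choose n : ℝ) := by
      rw [hD]; exact_mod_cast Nat.descFactorial_eq_factorial_mul_choose N n
    have hcpos : (0:ℝ) < (N.choose n : ℝ) := by exact_mod_cast Nat.choose_pos hNn
    have hfpos : (0:ℝ) < (Nat.factorial n : ℝ) := by exact_mod_cast Nat.factorial_pos n
    have hDpos : 0 < D := by rw [hfact]; positivity
    have hPpos : 0 < P := by rw [hP]; positivity
    have hDP : D ≤ P := by
      rw [hD, hP]
      exact_mod_cast Nat.descFactorial_le_pow N n
    have hNpow : (N:ℝ) * (N:ℝ)^(n-1) = P := by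
      rw [hP, ← pow_succ']
      congr 1
      omega
    have hPD : P - D ≤ (n:ℝ) * ((n:ℝ)-1) / 2 * (N:ℝ)^(n-1) :=
      pow_sub_descFactorial_le N n hNn
    have hcard_inj : ((Finset.univ.filter
        (fun j : Fin n → Fin N => Function.Injective j)).card : ℝ) = D := by
      rw [hD]
      congr 1
      rw [← Fintype.card_subtype]
      rw [Fintype.card_congr (Equiv.subtypeInjectiveEquivEmbedding (Fin n) (Fin N))]
      simp [Fintype.card_embedding_eq]
    have hcard_univ : ((Finset.univ : Finset (Fin n → Fin N)).card : ℝ) = P := by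
      rw [hP, Finset.card_univ, Fintype.card_fun]
      simp
    -- per-point estimates
    have perx : ∀ x : Fin N → Ω, |F x - G x| ≤ (n:ℝ) * ((n:ℝ)-1) * C
        ∧ |F x| ≤ (N:ℝ) * C ∧ |G x| ≤ (N:ℝ) * C := by
      intro x
      set SM : ℝ := ∑ j ∈ Finset.univ.filter (fun j : Fin n → Fin N => StrictMono j),
        φ (x ∘ j) with hSM
      set Ix : ℝ := ∑ j ∈ Finset.univ.filter (fun j : Fin n → Fin N => Function.Injective j),
        φ (x ∘ j) with hIx
      set Ax : ℝ := ∑ j : Fin n → Fin N, φ (x ∘ j) with hAx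
      have hIS : Ix = (Nat.factorial n : ℝ) * SM := by
        rw [hIx, hSM]
        exact sum_inj_eq_factorial_mul_sum_sm (fun j => φ (x ∘ j))
          (fun σ j => hsym σ (x ∘ j))
      have habs_sum : ∀ (s : Finset (Fin n → Fin N)),
          |∑ j ∈ s, φ (x ∘ j)| ≤ (s.card : ℝ) * C := by
        intro s
        calc |∑ j ∈ s, φ (x ∘ j)| ≤ ∑ j ∈ s, |φ (x ∘ j)| := Finset.abs_sum_le_sum_abs _ _
        _ ≤ ∑ _j ∈ s, C := Finset.sum_le_sum (fun j _ => hb _)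
        _ = (s.card : ℝ) * C := by rw [Finset.sum_const, nsmul_eq_mul]
      have hIabs : |Ix| ≤ D * C := by
        have := habs_sum (Finset.univ.filter (fun j : Fin n → Fin N => Function.Injective j))
        rwa [hcard_inj] at this
      have hAabs : |Ax| ≤ P * C := by
        have := habs_sum Finset.univ
        rwa [hcard_univ] at this
      have hAI : |Ix - Ax| ≤ (P - D) * C := by
        have hsplit : Ix + (∑ j ∈ Finset.univ.filter
            (fun j : Fin n → Fin N => ¬ Function.Injective j), φ (x ∘ j)) = Ax := by
          rw [hIx, hAx]
          exact Finset.sum_filter_add_sum_filter_not _ _ _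
        have hcard_not : ((Finset.univ.filter
            (fun j : Fin n → Fin N => ¬ Function.Injective j)).card : ℝ) = P - D := by
          have := Finset.card_filter_add_card_filter_not
            (s := (Finset.univ : Finset (Fin n → Fin N)))
            (p := fun j : Fin n → Fin N => Function.Injective j)
          have hcast : ((Finset.univ.filter
              (fun j : Fin n → Fin N => Function.Injective j)).card : ℝ)
              + ((Finset.univ.filter
              (fun j : Fin n → Fin N => ¬ Function.Injective j)).card : ℝ)
              = ((Finset.univ : Finset (Fin n → Fin N)).card : ℝ) := by
            exact_mod_cast congrArg (fun m : ℕ => (m : ℝ)) this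
          rw [hcard_inj, hcard_univ] at hcast
          linarith
        have := habs_sum (Finset.univ.filter
          (fun j : Fin n → Fin N => ¬ Function.Injective j))
        rw [hcard_not] at this
        have heq : Ix - Ax = -(∑ j ∈ Finset.univ.filter
            (fun j : Fin n → Fin N => ¬ Function.Injective j), φ (x ∘ j)) := by
          linarith [hsplit]
        rw [heq, abs_neg]
        exact this
      have hFval : F x = (N:ℝ) * (Ix / D) := by
        rw [hFdef]
        simp only
        rw [← Finset.sum_filter, ← hSM, hIS, hfact]
        field_simp
      have hGval : G x = (N:ℝ) * (Ax / P) := by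
        rw [hGdef]
        simp only
        rw [← hAx]
        ring
      have hnum : |Ix * (P - D) + (Ix - Ax) * D| ≤ 2 * C * D * (P - D) := by
        calc |Ix * (P - D) + (Ix - Ax) * D|
            ≤ |Ix * (P - D)| + |(Ix - Ax) * D| := abs_add_le _ _
        _ = |Ix| * (P - D) + |Ix - Ax| * D := by
            rw [abs_mul, abs_mul, abs_of_nonneg (by linarith : (0:ℝ) ≤ P - D),
              abs_of_nonneg (le_of_lt hDpos)]
        _ ≤ (D * C) * (P - D) + ((P - D) * C) * D := by
            apply add_le_add
            · exact mul_le_mul_of_nonneg_right hIabs (by linarith)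
            · exact mul_le_mul_of_nonneg_right hAI (le_of_lt hDpos)
        _ = 2 * C * D * (P - D) := by ring
      refine ⟨?_, ?_, ?_⟩
      · -- main difference bound
        have e1 : F x - G x = (N:ℝ) * ((Ix * (P - D) + (Ix - Ax) * D) / (D * P)) := by
          rw [hFval, hGval]
          field_simp
          ring
        rw [e1, abs_mul, abs_of_nonneg (le_of_lt hNR), abs_div,
          abs_of_pos (mul_pos hDpos hPpos), mul_div_assoc']
        rw [div_le_iff₀ (mul_pos hDpos hPpos)]
        calc (N:ℝ) * |Ix * (P - D) + (Ix - Ax) * D|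
            ≤ (N:ℝ) * (2 * C * D * (P - D)) :=
              mul_le_mul_of_nonneg_left hnum (le_of_lt hNR)
        _ ≤ (N:ℝ) * (2 * C * D * ((n:ℝ) * ((n:ℝ)-1) / 2 * (N:ℝ)^(n-1))) := by
              apply mul_le_mul_of_nonneg_left _ (le_of_lt hNR)
              apply mul_le_mul_of_nonneg_left hPD
              positivity
        _ = (n:ℝ) * ((n:ℝ)-1) * C * (D * ((N:ℝ) * (N:ℝ)^(n-1))) := by ring
        _ = (n:ℝ) * ((n:ℝ)-1) * C * (D * P) := by rw [hNpow]
      · rw [hFval, abs_mul, abs_of_nonneg (le_of_lt hNR), abs_div,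
          abs_of_pos hDpos]
        apply mul_le_mul_of_nonneg_left _ (le_of_lt hNR)
        rw [div_le_iff₀ hDpos]
        calc |Ix| ≤ D * C := hIabs
        _ = C * D := by ring
      · rw [hGval, abs_mul, abs_of_nonneg (le_of_lt hNR), abs_div,
          abs_of_pos hPpos]
        apply mul_le_mul_of_nonneg_left _ (le_of_lt hNR)
        rw [div_le_iff₀ hPpos]
        calc |Ax| ≤ P * C := hAabs
        _ = C * P := by ring
    -- measurability
    have hcomp : ∀ j : Fin n → Fin N, Measurable (fun x : Fin N → Ω => x ∘ j) := by
      intro j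
      exact measurable_pi_lambda _ (fun i => measurable_pi_apply (j i))
    have hFmeas : Measurable F := by
      rw [hFdef]
      apply Measurable.const_mul
      apply Finset.measurable_sum
      intro j _
      by_cases hj : StrictMono j
      · simp only [hj, if_true]
        exact hmeas.comp (hcomp j)
      · simp only [hj, if_false]
        exact measurable_const
    have hGmeas : Measurable G := by
      rw [hGdef]
      apply Measurable.const_mul
      apply Measurable.const_mul
      apply Finset.measurable_sum
      intro j _
      exact hmeas.comp (hcomp j)
    haveI : IsProbabilityMeasure μN := by rw [hμN]; infer_instance
    have key := log_integral_exp_compare μN F G hFmeas hGmeas ((N:ℝ) * C)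
      (fun x => (perx x).2.1) (fun x => (perx x).2.2)
      ((n:ℝ) * ((n:ℝ)-1) * C) (fun x => (perx x).1)
    rw [hpN, hptN, ← mul_sub, abs_mul, abs_of_nonneg (by positivity : (0:ℝ) ≤ (N:ℝ)⁻¹)]
    have hre : ((n : ℝ) * ((n : ℝ) - 1)) / N * C = (N:ℝ)⁻¹ * ((n:ℝ) * ((n:ℝ)-1) * C) := by
      field_simp
    rw [hre]
    exact mul_le_mul_of_nonneg_left key (by positivity)
  refine ⟨hmain, ?_⟩
  have hdiff : Tendsto (fun N => p N - pt N) atTop (nhds 0) := by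
    apply squeeze_zero_norm' (a := fun N : ℕ => ((n:ℝ) * ((n:ℝ)-1) * C) / N)
    · filter_upwards [eventually_ge_atTop n] with N hN
      rw [Real.norm_eq_abs]
      calc |p N - pt N| ≤ ((n : ℝ) * ((n : ℝ) - 1)) / N * C := hmain N hN
      _ = ((n:ℝ) * ((n:ℝ)-1) * C) / N := by ring
    · exact tendsto_const_div_atTop_nhds_zero_nat _
  intro L
  constructor
  · intro h
    have := h.sub hdiff
    simpa using this
  · intro h
    have := hdiff.add h
    simpa using this
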